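/- Let Γ be a connected graph and g : Γ → Γ a combinatorial immersion which induces an isomorphism on fundamental groups (with respect to some basepoint). Then g is injective on vertices. Consequently, a surjective immersion of graphs that is a homotopy equivalence is a graph isomorphism. -/

import Mathlib

/-- A (Serre) graph: a vertex set, a set of darts (oriented edges), a
fixed-point-free involution reversing darts, and an initial-vertex map. -/
structure SerreGraph where
  V : Type
  E : Type
  bar : E → E
  bar_bar : ∀ e, bar (bar e) = e
  bar_ne : ∀ e, bar e ≠ e
  src : E → V

/-- Terminal vertex of a dart. -/
def SerreGraph.tgt (G : SerreGraph) (e : G.E) : G.V := G.src (G.bar e)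

/-- Local finiteness of a graph. -/
def SerreGraph.LocFin (G : SerreGraph) : Prop := ∀ v : G.V, {e : G.E | G.src e = v}.Finite

/-- A combinatorial graph morphism (darts to darts). -/
structure GraphHom (G H : SerreGraph) where
  onV : G.V → H.V
  onE : G.E → H.E
  map_bar : ∀ e, onE (G.bar e) = H.bar (onE e)
  map_src : ∀ e, onV (G.src e) = H.src (onE e)

theorem GraphHom.map_tgt {G H : SerreGraph} (f : GraphHom G H) (e : G.E) :
    f.onV (G.tgt e) = H.tgt (f.onE e) := by
  unfold SerreGraph.tgt; rw [f.map_src, f.map_bar]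

/-- Composition of graph morphisms. -/
def GraphHom.comp {G H K : SerreGraph} (g : GraphHom H K) (f : GraphHom G H) :
    GraphHom G K where
  onV := g.onV ∘ f.onV
  onE := g.onE ∘ f.onE
  map_bar e := by simp [Function.comp, f.map_bar, g.map_bar]
  map_src e := by simp [Function.comp, f.map_src, g.map_src]

/-- Identity graph morphism. -/
def GraphHom.id (G : SerreGraph) : GraphHom G G :=
  ⟨fun v => v, fun e => e, fun _ => rfl, fun _ => rfl⟩

/-- Edge walks in a graph, with explicit endpoint bookkeeping. -/
inductive EWalk (G : SerreGraph) : G.V → G.V → Type where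
  | nil (v : G.V) : EWalk G v v
  | cons {u v w : G.V} (e : G.E) (hs : G.src e = u) (ht : G.tgt e = v)
      (p : EWalk G v w) : EWalk G u w

/-- A graph is connected if any two vertices are joined by an edge walk. -/
def SerreGraph.Conn (G : SerreGraph) : Prop := ∀ u v : G.V, Nonempty (EWalk G u v)

/-- Homotopy (rel endpoints) of edge walks: the equivalence relation generated
by cancelling backtracks `e · ē`. -/
inductive Htp (G : SerreGraph) : ∀ {u v : G.V}, EWalk G u v → EWalk G u v → Prop where
  | refl {u v} (p : EWalk G u v) : Htp G p p
  | symm {u v} {p q : EWalk G u v} : Htp G p q → Htp G q p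
  | trans {u v} {p q r : EWalk G u v} : Htp G p q → Htp G q r → Htp G p r
  | cons {u v w} (e : G.E) (hs : G.src e = u) (ht : G.tgt e = v)
      {p q : EWalk G v w} : Htp G p q →
      Htp G (EWalk.cons e hs ht p) (EWalk.cons e hs ht q)
  | cancel {u v w} (e : G.E) (hs : G.src e = u) (ht : G.tgt e = v)
      (hs' : G.src (G.bar e) = v) (ht' : G.tgt (G.bar e) = u)
      (p : EWalk G u w) :
      Htp G (EWalk.cons e hs ht (EWalk.cons (G.bar e) hs' ht' p)) p

/-- The image of an edge walk under a graph morphism. -/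
def GraphHom.mapWalk {G H : SerreGraph} (f : GraphHom G H) :
    ∀ {u v : G.V}, EWalk G u v → EWalk H (f.onV u) (f.onV v)
  | _, _, .nil v => .nil (f.onV v)
  | _, _, .cons e hs ht p =>
      .cons (f.onE e) (by rw [← f.map_src, hs]) (by rw [← f.map_tgt, ht])
        (f.mapWalk p)

/-- `f` induces a bijection on fundamental groups at `v₀` (surjectivity and
injectivity on homotopy classes of loops); for connected graphs this is
equivalent to `f` being a homotopy equivalence. -/
def InducesPi1Bij {G H : SerreGraph} (f : GraphHom G H) (v₀ : G.V) : Prop :=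
  (∀ q : EWalk H (f.onV v₀) (f.onV v₀),
      ∃ p : EWalk G v₀ v₀, Htp H (f.mapWalk p) q) ∧
  (∀ p p' : EWalk G v₀ v₀, Htp H (f.mapWalk p) (f.mapWalk p') → Htp G p p')

/-- Immersions: locally injective combinatorial graph maps. -/
def IsImmersion {G H : SerreGraph} (f : GraphHom G H) : Prop :=
  ∀ a b : G.E, G.src a = G.src b → f.onE a = f.onE b → a = b

/-- Isomorphisms of graphs. -/
def IsGraphIso {G H : SerreGraph} (f : GraphHom G H) : Prop :=
  Function.Bijective f.onV ∧ Function.Bijective f.onE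

/-- `f` is the Stallings fold identifying the (closures of the) distinct darts
`e₁, e₂` with common initial vertex: it is surjective, identifies exactly the
orbits of `{e₁, e₂}` on darts and `{tgt e₁, tgt e₂}` on vertices, and nothing
else. -/
def IsFoldAt {G H : SerreGraph} (f : GraphHom G H) (e₁ e₂ : G.E) : Prop :=
  e₁ ≠ e₂ ∧ e₂ ≠ G.bar e₁ ∧ G.src e₁ = G.src e₂ ∧
  Function.Surjective f.onV ∧ Function.Surjective f.onE ∧
  f.onE e₁ = f.onE e₂ ∧
  (∀ a b : G.E, f.onE a = f.onE b →
    a = b ∨ ({a, b} : Set G.E) = {e₁, e₂} ∨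
      ({a, b} : Set G.E) = {G.bar e₁, G.bar e₂}) ∧
  (∀ u v : G.V, f.onV u = f.onV v →
    u = v ∨ ({u, v} : Set G.V) = {G.tgt e₁, G.tgt e₂})

/-- A Stallings fold. -/
def IsFold {G H : SerreGraph} (f : GraphHom G H) : Prop := ∃ e₁ e₂, IsFoldAt f e₁ e₂

/-- A type-1 Stallings fold: the folded edges have distinct terminal vertices. -/
def IsFold1 {G H : SerreGraph} (f : GraphHom G H) : Prop :=
  ∃ e₁ e₂, IsFoldAt f e₁ e₂ ∧ G.tgt e₁ ≠ G.tgt e₂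

/-- The composite `fs (n-1) ∘ ⋯ ∘ fs 0` of a chain of graph morphisms. -/
def chainComp (Gs : ℕ → SerreGraph) (fs : ∀ i : ℕ, GraphHom (Gs i) (Gs (i + 1))) :
    ∀ n : ℕ, GraphHom (Gs 0) (Gs n)
  | 0 => GraphHom.id (Gs 0)
  | n + 1 => (fs n).comp (chainComp Gs fs n)

/-!
STATEMENT 11: Let `Γ` be a connected graph and `g : Γ → Γ` a combinatorial
immersion inducing an isomorphism on fundamental groups (with respect to a
basepoint `v₀`; `InducesPi1Bij` encodes bijectivity on homotopy classes of
loops).  Then `g` is injective on vertices.  Consequently, a surjective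
immersion that is a homotopy equivalence is a graph isomorphism.
-/

namespace StallingsAux11

open FreeGroup

variable {G H : SerreGraph}

/-- Concatenation of edge walks. -/
def wapp : ∀ {u v w : G.V}, EWalk G u v → EWalk G v w → EWalk G u w
  | _, _, _, .nil _, q => q
  | _, _, _, .cons e hs ht p, q => .cons e hs ht (wapp p q)

/-- Reversal of an edge walk. -/
def wrev : ∀ {u v : G.V}, EWalk G u v → EWalk G v u
  | _, _, .nil v => .nil v
  | _, _, .cons e hs ht p =>
      wapp (wrev p)
        (.cons (G.bar e) ht (by rw [SerreGraph.tgt, G.bar_bar]; exact hs) (.nil _))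

/-- The first edge of a walk, if any. -/
def firstE : ∀ {u v : G.V}, EWalk G u v → Option G.E
  | _, _, .nil _ => none
  | _, _, .cons e _ _ _ => some e

/-- A walk is reduced when it contains no backtrack. -/
def Reduced : ∀ {u v : G.V}, EWalk G u v → Prop
  | _, _, .nil _ => True
  | _, _, .cons e _ _ p => Reduced p ∧ firstE p ≠ some (G.bar e)

/-- The element of the free group on darts associated to a walk. -/
def toWord : ∀ {u v : G.V}, EWalk G u v → FreeGroup G.E
  | _, _, .nil _ => 1
  | _, _, .cons e _ _ p => FreeGroup.of e * (FreeGroup.of (G.bar e))⁻¹ * toWord p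

theorem cons_congr {u v w : G.V} {e e' : G.E} (he : e = e')
    (hs : G.src e = u) (ht : G.tgt e = v) (hs' : G.src e' = u) (ht' : G.tgt e' = v)
    (p : EWalk G v w) :
    EWalk.cons e hs ht p = EWalk.cons e' hs' ht' p := by subst he; rfl

theorem mapWalk_wapp (f : GraphHom G H) :
    ∀ {u v w : G.V} (p : EWalk G u v) (q : EWalk G v w),
      f.mapWalk (wapp p q) = wapp (f.mapWalk p) (f.mapWalk q)
  | _, _, _, .nil _, q => rfl
  | _, _, _, .cons e hs ht p, q => by
      simp [wapp, GraphHom.mapWalk, mapWalk_wapp f p q]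

theorem mapWalk_wrev (f : GraphHom G H) :
    ∀ {u v : G.V} (p : EWalk G u v),
      f.mapWalk (wrev p) = wrev (f.mapWalk p)
  | _, _, .nil _ => rfl
  | _, _, .cons e hs ht p => by
      show f.mapWalk (wapp (wrev p) _) = wapp (wrev (f.mapWalk p)) _
      rw [mapWalk_wapp, mapWalk_wrev f p]
      refine congrArg _ ?_
      show EWalk.cons (f.onE (G.bar e)) _ _ (.nil _) = EWalk.cons (H.bar (f.onE e)) _ _ (.nil _)
      exact cons_congr (f.map_bar e) _ _ _ _ _

theorem toWord_wapp :
    ∀ {u v w : G.V} (p : EWalk G u v) (q : EWalk G v w),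
      toWord (wapp p q) = toWord p * toWord q
  | _, _, _, .nil _, q => by simp [wapp, toWord]
  | _, _, _, .cons e hs ht p, q => by
      simp [wapp, toWord, toWord_wapp p q, mul_assoc]

theorem toWord_wrev :
    ∀ {u v : G.V} (p : EWalk G u v), toWord (wrev p) = (toWord p)⁻¹
  | _, _, .nil _ => by simp [wrev, toWord]
  | _, _, .cons e hs ht p => by
      show toWord (wapp (wrev p) _) = _
      rw [toWord_wapp, toWord_wrev p]
      simp only [toWord, G.bar_bar]
      group

theorem htp_toWord {u v : G.V} {p q : EWalk G u v} (h : Htp G p q) :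
    toWord p = toWord q := by
  induction h with
  | refl _ => rfl
  | symm _ ih => exact ih.symm
  | trans _ _ ih1 ih2 => exact ih1.trans ih2
  | cons e hs ht _ ih => simp [toWord, ih]
  | cancel e hs ht hs' ht' p =>
      show FreeGroup.of e * (FreeGroup.of (G.bar e))⁻¹ *
        (FreeGroup.of (G.bar e) * (FreeGroup.of (G.bar (G.bar e)))⁻¹ * toWord p) = toWord p
      rw [G.bar_bar]; group

theorem mapHtp (f : GraphHom G H) {u v : G.V} {p q : EWalk G u v} (h : Htp G p q) :
    Htp H (f.mapWalk p) (f.mapWalk q) := by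
  induction h with
  | refl p => exact Htp.refl _
  | symm _ ih => exact Htp.symm ih
  | trans _ _ ih1 ih2 => exact Htp.trans ih1 ih2
  | cons e hs ht _ ih => exact Htp.cons _ _ _ ih
  | cancel e hs ht hs' ht' p =>
      show Htp H (EWalk.cons (f.onE e) _ _ (EWalk.cons (f.onE (G.bar e)) _ _ (f.mapWalk p)))
        (f.mapWalk p)
      have h2 : EWalk.cons (f.onE (G.bar e)) (by rw [← f.map_src, hs'])
            (by rw [← f.map_tgt, ht']) (f.mapWalk p)
          = EWalk.cons (H.bar (f.onE e))
            (show H.src (H.bar (f.onE e)) = _ by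
              show H.tgt (f.onE e) = _ ; rw [← f.map_tgt, ht])
            (by rw [SerreGraph.tgt, H.bar_bar, ← f.map_src, hs]) (f.mapWalk p) :=
        cons_congr (f.map_bar e) _ _ _ _ _
      rw [h2]
      exact Htp.cancel _ _ _ _ _ _

theorem exists_reduced : ∀ {u v : G.V} (p : EWalk G u v),
    ∃ q : EWalk G u v, Htp G p q ∧ Reduced q := by
  intro u v p
  induction p with
  | nil w => exact ⟨.nil w, Htp.refl _, trivial⟩
  | cons e hs ht p ih =>
      obtain ⟨q, hq, hr⟩ := ih
      have h1 : Htp G (.cons e hs ht p) (.cons e hs ht q) := Htp.cons e hs ht hq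
      cases q with
      | nil w => exact ⟨.cons e hs ht (.nil _), h1, trivial, by simp [firstE]⟩
      | cons f hf htf q' =>
          by_cases hfe : f = G.bar e
          · subst hfe
            have hvu : _ = _ := htf
            rw [SerreGraph.tgt, G.bar_bar, hs] at hvu
            subst hvu
            exact ⟨q', Htp.trans h1 (Htp.cancel e hs ht hf htf q'), hr.1⟩
          · exact ⟨.cons e hs ht (.cons f hf htf q'), h1, hr, by
              simp only [firstE, ne_eq, Option.some.injEq]; exact hfe⟩

theorem reduced_map (f : GraphHom G H) (himm : IsImmersion f) :
    ∀ {u v : G.V} (p : EWalk G u v), Reduced p → Reduced (f.mapWalk p) := by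
  intro u v p
  induction p with
  | nil w => intro _; trivial
  | cons e hs ht p ih =>
      intro hr
      refine ⟨ih hr.1, ?_⟩
      cases p with
      | nil w => simp [GraphHom.mapWalk, firstE]
      | cons f' hf' htf' p' =>
          simp only [GraphHom.mapWalk, firstE, ne_eq, Option.some.injEq]
          intro heq
          apply hr.2
          simp only [firstE, Option.some.injEq]
          apply himm f' (G.bar e)
          · rw [hf', show G.src (G.bar e) = G.tgt e from rfl, ht]
          · rw [heq, f.map_bar]

/-- The letter list of a walk. -/
def wordOf : ∀ {u v : G.V}, EWalk G u v → List (G.E × Bool)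
  | _, _, .nil _ => []
  | _, _, .cons e _ _ p => (e, true) :: (G.bar e, false) :: wordOf p

theorem toWord_eq_mk : ∀ {u v : G.V} (p : EWalk G u v),
    toWord p = FreeGroup.mk (wordOf p)
  | _, _, .nil _ => FreeGroup.one_eq_mk
  | _, _, .cons e hs ht p => by
      show FreeGroup.of e * (FreeGroup.of (G.bar e))⁻¹ * toWord p = _
      rw [toWord_eq_mk p, FreeGroup.of, FreeGroup.of, FreeGroup.inv_mk,
        FreeGroup.mul_mk, FreeGroup.mul_mk]
      rfl

theorem reduce_cons₂ {α : Type*} [DecidableEq α] (x y : α × Bool) (l : List (α × Bool))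
    (hred : FreeGroup.reduce (y :: l) = y :: l)
    (h1 : ¬(x.1 = y.1 ∧ x.2 = !y.2)) :
    FreeGroup.reduce (x :: y :: l) = x :: y :: l := by
  rw [FreeGroup.reduce.cons, hred]
  dsimp only
  rw [if_neg h1]

theorem reduce_wordOf [DecidableEq G.E] :
    ∀ {u v : G.V} (p : EWalk G u v), Reduced p →
      FreeGroup.reduce (wordOf p) = wordOf p := by
  intro u v p
  induction p with
  | nil w => intro _; rfl
  | cons e hs ht p ih =>
      intro hr
      have hbar : ¬(((e, true) : G.E × Bool).1 = ((G.bar e, false) : G.E × Bool).1 ∧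
          ((e, true) : G.E × Bool).2 = !((G.bar e, false) : G.E × Bool).2) := by
        rintro ⟨h1, -⟩; exact G.bar_ne e h1.symm
      cases p with
      | nil w =>
          simp only [wordOf]
          exact reduce_cons₂ _ _ _ (FreeGroup.reduce_singleton _) hbar
      | cons f' hf' htf' p' =>
          have htail := ih hr.1
          simp only [wordOf] at htail ⊢
          have h2 : FreeGroup.reduce
              ((G.bar e, false) :: (f', true) :: (G.bar f', false) :: wordOf p')
              = (G.bar e, false) :: (f', true) :: (G.bar f', false) :: wordOf p' :=
            reduce_cons₂ _ _ _ htail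
              (by rintro ⟨h1, -⟩; exact hr.2 (by simp only [firstE, Option.some.injEq]; exact h1.symm))
          exact reduce_cons₂ _ _ _ h2 hbar

theorem reduced_cons_toWord_ne_one {u v w : G.V} {e : G.E}
    {hs : G.src e = u} {ht : G.tgt e = v} {p : EWalk G v w}
    (hr : Reduced (EWalk.cons e hs ht p))
    (h1 : toWord (EWalk.cons e hs ht p) = 1) : False := by
  letI : DecidableEq G.E := Classical.decEq _
  rw [toWord_eq_mk, FreeGroup.one_eq_mk] at h1
  have h2 := FreeGroup.reduce.sound h1
  rw [reduce_wordOf _ hr] at h2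
  change (e, true) :: (G.bar e, false) :: wordOf p = [] at h2
  exact List.cons_ne_nil _ _ h2

/-- Cast a walk along equalities of its endpoints. -/
def wcast {u v u' v' : G.V} (h1 : u = u') (h2 : v = v') (p : EWalk G u v) :
    EWalk G u' v' := h1 ▸ h2 ▸ p

theorem toWord_wcast {u v u' v' : G.V} (h1 : u = u') (h2 : v = v') (p : EWalk G u v) :
    toWord (wcast h1 h2 p) = toWord p := by subst h1; subst h2; rfl

end StallingsAux11

open StallingsAux11 in
theorem pi1_injective_immersion_is_injective_on_vertices
    {G : SerreGraph} (hconn : G.Conn)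
    (g : GraphHom G G) (himm : IsImmersion g)
    (v₀ : G.V) (hiso : InducesPi1Bij g v₀) :
    Function.Injective g.onV ∧
      (Function.Surjective g.onV → Function.Surjective g.onE → IsGraphIso g) := by
  have hinj : Function.Injective g.onV := by
    intro u v h
    by_contra hne
    obtain ⟨σ⟩ := hconn v₀ u
    obtain ⟨τ⟩ := hconn v₀ v
    obtain ⟨ρ, hρ, hρred⟩ := exists_reduced (wapp (wrev σ) τ)
    clear hρ
    obtain ⟨γ₀, hγ₀⟩ := hiso.1
      (wrev (wapp (g.mapWalk σ)
        (wapp (wcast rfl h.symm (g.mapWalk ρ)) (wrev (g.mapWalk σ)))))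
    obtain ⟨δ, hδ, hδred⟩ := exists_reduced (wapp (wrev σ) (wapp γ₀ (wapp σ ρ)))
    have hw : toWord (g.mapWalk δ) = 1 := by
      rw [← htp_toWord (mapHtp g hδ)]
      rw [mapWalk_wapp, mapWalk_wapp, mapWalk_wapp, mapWalk_wrev]
      rw [toWord_wapp, toWord_wapp, toWord_wapp, toWord_wrev]
      rw [htp_toWord hγ₀]
      rw [toWord_wrev, toWord_wapp, toWord_wapp, toWord_wrev, toWord_wcast]
      group
    cases δ with
    | nil w => exact hne rfl
    | cons e hs ht p =>
        exact reduced_cons_toWord_ne_one (reduced_map g himm _ hδred) hw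
  refine ⟨hinj, fun hsV hsE => ⟨⟨hinj, hsV⟩, ⟨?_, hsE⟩⟩⟩
  intro a b hab
  apply himm a b _ hab
  apply hinj
  rw [g.map_src, g.map_src, hab]
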